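/- If 𝓑 is an unpackable directed family with U ∈ 𝓑, then for every constructible X ⊆ U there is a unique finite set 𝓢 of balls with X = Ch(𝓢), where Ch takes the union over balls B on even levels of the forest (𝓢, ⊆) of B minus the union of its immediate predecessors in 𝓢. -/

import Mathlib

variable {U : Type*}

/-- A directed family: nonempty sets, any two nested or disjoint. -/
def DirFam (𝓑 : Set (Set U)) : Prop :=
  (∀ B ∈ 𝓑, B.Nonempty) ∧
    ∀ B₀ ∈ 𝓑, ∀ B₁ ∈ 𝓑, B₀ ⊆ B₁ ∨ B₁ ⊆ B₀ ∨ B₀ ∩ B₁ = ∅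

/-- Constructible sets: finite boolean combinations of balls. -/
inductive Constr (𝓑 : Set (Set U)) : Set U → Prop
  | ball {B : Set U} : B ∈ 𝓑 → Constr 𝓑 B
  | compl {X : Set U} : Constr 𝓑 X → Constr 𝓑 Xᶜ
  | union {X Y : Set U} : Constr 𝓑 X → Constr 𝓑 Y → Constr 𝓑 (X ∪ Y)

/-- Unpackable: no ball is a finite union of proper sub-balls. -/
def Unpackable (𝓑 : Set (Set U)) : Prop :=
  ∀ A ∈ 𝓑, ∀ H : Set (Set U), H.Finite → H ⊆ 𝓑 → (∀ B ∈ H, B ⊂ A) → A ≠ ⋃₀ H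

/-- Levels of a (finite) subset of a partial order: Lev 0 is the set of maximal
elements, and Lev (n+1) is Lev n of the set with its maximal elements removed. -/
def Lev {α : Type*} [PartialOrder α] : ℕ → Set α → Set α
  | 0, S => {a | a ∈ S ∧ ∀ b ∈ S, a ≤ b → a = b}
  | n + 1, S => Lev n (S \ {a | a ∈ S ∧ ∀ b ∈ S, a ≤ b → a = b})

/-- The swiss cheese operator: the union, over balls B on even levels of 𝓢, of
B minus the union of its immediate predecessors (the next-level balls inside B). -/
def Ch (𝓢 : Set (Set U)) : Set U :=
  ⋃ n : ℕ, ⋃ B ∈ Lev (2 * n) 𝓢, B \ ⋃₀ {C | C ∈ Lev (2 * n + 1) 𝓢 ∧ C ⊆ B}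

namespace SwissAux

def Abv (S : Set (Set U)) (B : Set U) : Set (Set U) := {C | C ∈ S ∧ B ⊂ C}

lemma abv_subset (S : Set (Set U)) (B : Set U) : Abv S B ⊆ S := fun _ hC => hC.1

variable {𝓑 : Set (Set U)}

lemma nested (h : DirFam 𝓑) {B C : Set U} (hB : B ∈ 𝓑) (hC : C ∈ 𝓑)
    (hx : (B ∩ C).Nonempty) : B ⊆ C ∨ C ⊆ B := by
  rcases h.2 B hB C hC with h1 | h1 | h1
  · exact Or.inl h1
  · exact Or.inr h1
  · rw [h1] at hx; exact absurd hx (by simp)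

lemma chain_greatest (h : DirFam 𝓑) {T : Set (Set U)} (hT : T ⊆ 𝓑) (hfin : T.Finite)
    (hne : T.Nonempty) (hch : ∀ C ∈ T, ∀ D ∈ T, (C ∩ D).Nonempty) :
    ∃ M ∈ T, ∀ C ∈ T, C ⊆ M := by
  obtain ⟨M, hM, hmax⟩ : ∃ M ∈ T, ∀ C ∈ T, id M ≤ id C → id M = id C := by
    obtain ⟨M, hM⟩ := hfin.exists_maximal hne
    exact ⟨M, hM.1, fun C hC h => le_antisymm h (hM.2 hC h)⟩
  refine ⟨M, hM, fun C hC => ?_⟩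
  rcases nested h (hT hM) (hT hC) (hch M hM C hC) with h1 | h1
  · exact le_of_eq (hmax C hC h1).symm
  · exact h1

lemma chain_least (h : DirFam 𝓑) {T : Set (Set U)} (hT : T ⊆ 𝓑) (hfin : T.Finite)
    (hne : T.Nonempty) (hch : ∀ C ∈ T, ∀ D ∈ T, (C ∩ D).Nonempty) :
    ∃ M ∈ T, ∀ C ∈ T, M ⊆ C := by
  obtain ⟨M, hM, hmin⟩ : ∃ M ∈ T, ∀ C ∈ T, id C ≤ id M → id M = id C := by
    obtain ⟨M, hM⟩ := hfin.exists_minimal hne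
    exact ⟨M, hM.1, fun C hC h => le_antisymm (hM.2 hC h) h⟩
  refine ⟨M, hM, fun C hC => ?_⟩
  rcases nested h (hT hM) (hT hC) (hch M hM C hC) with h1 | h1
  · exact h1
  · exact le_of_eq (hmin C hC h1)

lemma mem_lev_iff (h : DirFam 𝓑) :
    ∀ (n : ℕ) (S : Set (Set U)), S.Finite → S ⊆ 𝓑 →
      ∀ B, (B ∈ Lev n S ↔ B ∈ S ∧ (Abv S B).ncard = n) := by
  intro n
  induction n with
  | zero =>
    intro S hfin hsub B
    have hA : (Abv S B).Finite := hfin.subset (abv_subset S B)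
    constructor
    · rintro ⟨hBS, hmax⟩
      refine ⟨hBS, ?_⟩
      rw [Set.ncard_eq_zero hA]
      ext C
      simp only [Abv, Set.mem_setOf_eq, Set.mem_empty_iff_false, iff_false, not_and]
      intro hCS hBC
      exact hBC.ne (hmax C hCS hBC.subset)
    · rintro ⟨hBS, hn⟩
      rw [Set.ncard_eq_zero hA] at hn
      refine ⟨hBS, fun C hCS hBC => ?_⟩
      by_contra hne
      have : C ∈ Abv S B := ⟨hCS, lt_of_le_of_ne hBC hne⟩
      rw [hn] at this
      exact this
  | succ n ih =>
    intro S hfin hsub B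
    have hfin' : (S \ {a | a ∈ S ∧ ∀ b ∈ S, a ≤ b → a = b}).Finite :=
      hfin.subset Set.diff_subset
    have hsub' : (S \ {a | a ∈ S ∧ ∀ b ∈ S, a ≤ b → a = b}) ⊆ 𝓑 :=
      fun C hC => hsub hC.1
    have hlev : B ∈ Lev (n + 1) S ↔
        B ∈ (S \ {a | a ∈ S ∧ ∀ b ∈ S, a ≤ b → a = b}) ∧
          (Abv (S \ {a | a ∈ S ∧ ∀ b ∈ S, a ≤ b → a = b}) B).ncard = n := by
      show B ∈ Lev n _ ↔ _
      exact ih _ hfin' hsub' B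
    by_cases hBS : B ∈ S
    · by_cases hBmx : B ∈ {a | a ∈ S ∧ ∀ b ∈ S, a ≤ b → a = b}
      · -- B maximal: both sides false
        constructor
        · intro hl
          rw [hlev] at hl
          exact absurd hBmx hl.1.2
        · rintro ⟨-, hn⟩
          exfalso
          have hA : Abv S B = ∅ := by
            ext C
            simp only [Abv, Set.mem_setOf_eq, Set.mem_empty_iff_false, iff_false, not_and]
            intro hCS hBC
            exact hBC.ne (hBmx.2 C hCS hBC.subset)
          rw [hA, Set.ncard_empty] at hn
          omega
      · -- B not maximal
        have hBne : B.Nonempty := h.1 B (hsub hBS)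
        have hTne : (Abv S B).Nonempty := by
          simp only [Set.mem_setOf_eq, hBS, true_and, not_forall] at hBmx
          obtain ⟨C, hCS, hle, hne⟩ := hBmx
          exact ⟨C, hCS, lt_of_le_of_ne hle hne⟩
        have hTfin : (Abv S B).Finite := hfin.subset (abv_subset S B)
        have hTsub : Abv S B ⊆ 𝓑 := fun C hC => hsub hC.1
        obtain ⟨M, hMS, hgreat⟩ := chain_greatest h hTsub hTfin hTne
          (fun C hC D hD => hBne.mono (Set.subset_inter hC.2.subset.subset hD.2.subset.subset))
        have hMmx : M ∈ {a | a ∈ S ∧ ∀ b ∈ S, a ≤ b → a = b} := by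
          refine ⟨hMS.1, fun C hCS hMC => ?_⟩
          have hC : C ∈ Abv S B := ⟨hCS, lt_of_lt_of_le hMS.2 hMC⟩
          exact le_antisymm hMC (hgreat C hC)
        have hAbv' : Abv (S \ {a | a ∈ S ∧ ∀ b ∈ S, a ≤ b → a = b}) B = Abv S B \ {M} := by
          ext C
          simp only [Abv, Set.mem_setOf_eq, Set.mem_diff, Set.mem_singleton_iff]
          constructor
          · rintro ⟨⟨hCS, hCnM⟩, hBC⟩
            exact ⟨⟨hCS, hBC⟩, fun hCM => hCnM (by rw [hCM]; exact hMmx)⟩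
          · rintro ⟨⟨hCS, hBC⟩, hCM⟩
            exact ⟨⟨hCS, fun hCmx => hCM (hCmx.2 M hMS.1 (hgreat C ⟨hCS, hBC⟩))⟩, hBC⟩
        have hcard : (Abv S B \ {M}).ncard + 1 = (Abv S B).ncard :=
          Set.ncard_diff_singleton_add_one hMS hTfin
        rw [hlev, hAbv']
        constructor
        · rintro ⟨-, hn⟩
          exact ⟨hBS, by omega⟩
        · rintro ⟨-, hn⟩
          exact ⟨⟨hBS, hBmx⟩, by omega⟩
    · constructor
      · intro hl
        rw [hlev] at hl
        exact absurd hl.1.1 hBS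
      · rintro ⟨hB, -⟩
        exact absurd hB hBS

lemma mem_Ch_iff (h : DirFam 𝓑) {𝓢 : Set (Set U)} (hfin : 𝓢.Finite) (hsub : 𝓢 ⊆ 𝓑)
    (x : U) : x ∈ Ch 𝓢 ↔ Odd ({B | B ∈ 𝓢 ∧ x ∈ B}.ncard) := by
  classical
  set T : Set (Set U) := {B | B ∈ 𝓢 ∧ x ∈ B} with hT
  have hTsub𝓢 : T ⊆ 𝓢 := fun B hB => hB.1
  have hTfin : T.Finite := hfin.subset hTsub𝓢
  have hTsub : T ⊆ 𝓑 := fun B hB => hsub hB.1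
  have hch : ∀ C ∈ T, ∀ D ∈ T, (C ∩ D).Nonempty := fun C hC D hD => ⟨x, hC.2, hD.2⟩
  have habvT : ∀ C ∈ T, Abv 𝓢 C = {D | D ∈ T ∧ C ⊂ D} := by
    intro C hC
    ext D
    simp only [Abv, Set.mem_setOf_eq, hT]
    constructor
    · rintro ⟨hD𝓢, hCD⟩
      exact ⟨⟨hD𝓢, hCD.subset hC.2⟩, hCD⟩
    · rintro ⟨⟨hD𝓢, -⟩, hCD⟩
      exact ⟨hD𝓢, hCD⟩
  rcases Set.eq_empty_or_nonempty T with hTe | hTne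
  · -- T empty
    rw [hTe, Set.ncard_empty]
    simp only [Nat.odd_iff]
    constructor
    · intro hx
      simp only [Ch, Set.mem_iUnion, Set.mem_diff] at hx
      obtain ⟨n, B, hBlev, hxB, -⟩ := hx
      have hB𝓢 : B ∈ 𝓢 := ((mem_lev_iff h _ 𝓢 hfin hsub B).1 hBlev).1
      have : B ∈ T := ⟨hB𝓢, hxB⟩
      rw [hTe] at this
      exact absurd this (Set.notMem_empty B)
    · omega
  · obtain ⟨B₀, hB₀, hleast⟩ := chain_least h hTsub hTfin hTne hch
    have hB₀nA : B₀ ∉ Abv 𝓢 B₀ := fun hc => hc.2.ne rfl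
    have hTeq : T = insert B₀ (Abv 𝓢 B₀) := by
      ext C
      constructor
      · intro hC
        rcases eq_or_ne C B₀ with hCB | hCB
        · exact hCB ▸ Set.mem_insert _ _
        · exact Set.mem_insert_of_mem _ ⟨hC.1, lt_of_le_of_ne (hleast C hC) (Ne.symm hCB)⟩
      · intro hC
        rcases hC with hC | hC
        · exact hC ▸ hB₀
        · rw [habvT B₀ hB₀] at hC
          exact hC.1
    have hdT : T.ncard = (Abv 𝓢 B₀).ncard + 1 := by
      rw [hTeq]
      exact Set.ncard_insert_of_notMem hB₀nA (hfin.subset (abv_subset 𝓢 B₀))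
    -- key construction: for B ∈ T with B ≠ B₀, there is C ⊂ B with x ∈ C at depth +1
    have hkey : ∀ B ∈ T, B ≠ B₀ → ∃ C, C ∈ 𝓢 ∧ C ⊂ B ∧ x ∈ C ∧
        (Abv 𝓢 C).ncard = (Abv 𝓢 B).ncard + 1 := by
      intro B hB hne
      set T' : Set (Set U) := {D | D ∈ T ∧ D ⊂ B} with hT'
      have hT'sub : T' ⊆ 𝓑 := fun D hD => hTsub hD.1
      have hT'fin : T'.Finite := hTfin.subset (fun D hD => hD.1)
      have hB₀B : B₀ ⊂ B := lt_of_le_of_ne (hleast B hB) (Ne.symm hne)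
      have hT'ne : T'.Nonempty := ⟨B₀, hB₀, hB₀B⟩
      obtain ⟨C, hCT', hgr⟩ := chain_greatest h hT'sub hT'fin hT'ne
        (fun C hC D hD => hch C hC.1 D hD.1)
      refine ⟨C, hCT'.1.1, hCT'.2, hCT'.1.2, ?_⟩
      have heq : Abv 𝓢 C = insert B (Abv 𝓢 B) := by
        ext D
        constructor
        · rintro ⟨hD𝓢, hCD⟩
          have hDT : D ∈ T := ⟨hD𝓢, hCD.subset hCT'.1.2⟩
          rcases nested h (hTsub hDT) (hTsub hB) (hch D hDT B hB) with h1 | h1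
          · rcases eq_or_ne D B with hDB | hDB
            · exact hDB ▸ Set.mem_insert _ _
            · exfalso
              have : D ∈ T' := ⟨hDT, lt_of_le_of_ne h1 hDB⟩
              exact hCD.not_ge (hgr D this)
          · rcases eq_or_ne B D with hBD | hBD
            · exact hBD ▸ Set.mem_insert _ _
            · exact Set.mem_insert_of_mem _ ⟨hD𝓢, lt_of_le_of_ne h1 hBD⟩
        · intro hD
          rcases hD with hD | hD
          · exact hD ▸ ⟨hB.1, hCT'.2⟩
          · exact ⟨hD.1, lt_trans hCT'.2 hD.2⟩
      rw [heq]
      exact Set.ncard_insert_of_notMem (fun hc => hc.2.ne rfl)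
        (hfin.subset (abv_subset 𝓢 B))
    constructor
    · -- x ∈ Ch 𝓢 → odd
      intro hx
      simp only [Ch, Set.mem_iUnion, Set.mem_diff] at hx
      obtain ⟨n, B, hBlev, hxB, hnot⟩ := hx
      obtain ⟨hB𝓢, hdB⟩ := (mem_lev_iff h _ 𝓢 hfin hsub B).1 hBlev
      have hBT : B ∈ T := ⟨hB𝓢, hxB⟩
      have hBB₀ : B = B₀ := by
        by_contra hne
        obtain ⟨C, hC𝓢, hCB, hxC, hdC⟩ := hkey B hBT hne
        refine hnot ⟨C, ⟨?_, hCB.subset⟩, hxC⟩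
        rw [mem_lev_iff h _ 𝓢 hfin hsub C]
        exact ⟨hC𝓢, by rw [hdC, hdB]⟩
      rw [hdT, ← hBB₀, hdB]
      exact ⟨n, by ring⟩
    · -- odd → x ∈ Ch 𝓢
      intro hodd
      rw [hdT, Nat.odd_iff] at hodd
      have heven : ∃ n, (Abv 𝓢 B₀).ncard = 2 * n := ⟨(Abv 𝓢 B₀).ncard / 2, by omega⟩
      obtain ⟨n, hn⟩ := heven
      simp only [Ch, Set.mem_iUnion, Set.mem_diff]
      refine ⟨n, B₀, ?_, hB₀.2, ?_⟩
      · rw [mem_lev_iff h _ 𝓢 hfin hsub B₀]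
        exact ⟨hB₀.1, hn⟩
      · rintro ⟨C, ⟨hClev, hCB₀⟩, hxC⟩
        obtain ⟨hC𝓢, hdC⟩ := (mem_lev_iff h _ 𝓢 hfin hsub C).1 hClev
        have hCT : C ∈ T := ⟨hC𝓢, hxC⟩
        have : C = B₀ := le_antisymm hCB₀ (hleast C hCT)
        rw [this, hn] at hdC
        omega

/-- the sets expressible as Ch of a finite subfamily -/
def IsCh (𝓑 : Set (Set U)) (X : Set U) : Prop :=
  ∃ 𝓢 : Set (Set U), 𝓢 ⊆ 𝓑 ∧ 𝓢.Finite ∧ X = Ch 𝓢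

lemma ch_empty (h : DirFam 𝓑) : Ch (∅ : Set (Set U)) = ∅ := by
  ext x
  rw [mem_Ch_iff h Set.finite_empty (Set.empty_subset 𝓑) x]
  simp [Nat.odd_iff]

lemma ch_singleton (h : DirFam 𝓑) {B : Set U} (hB : B ∈ 𝓑) : Ch {B} = B := by
  ext x
  rw [mem_Ch_iff h (Set.finite_singleton B) (Set.singleton_subset_iff.2 hB) x]
  by_cases hx : x ∈ B
  · have : {C | C ∈ ({B} : Set (Set U)) ∧ x ∈ C} = {B} := by
      ext C; simp only [Set.mem_setOf_eq, Set.mem_singleton_iff]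
      constructor
      · rintro ⟨hC, -⟩; exact hC
      · rintro rfl; exact ⟨rfl, hx⟩
    rw [this, Set.ncard_singleton]
    simpa [Nat.odd_iff]
  · have : {C | C ∈ ({B} : Set (Set U)) ∧ x ∈ C} = ∅ := by
      ext C; simp only [Set.mem_setOf_eq, Set.mem_singleton_iff, Set.mem_empty_iff_false,
        iff_false, not_and]
      rintro rfl; exact hx
    rw [this, Set.ncard_empty]
    simp [Nat.odd_iff, hx]

lemma ch_symmDiff (h : DirFam 𝓑) {𝓢 𝓣 : Set (Set U)} (hfS : 𝓢.Finite) (hsS : 𝓢 ⊆ 𝓑)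
    (hfT : 𝓣.Finite) (hsT : 𝓣 ⊆ 𝓑) :
    Ch (symmDiff 𝓢 𝓣) = symmDiff (Ch 𝓢) (Ch 𝓣) := by
  have hfD : (symmDiff 𝓢 𝓣).Finite := (hfS.union hfT).subset symmDiff_le_sup
  have hsD : symmDiff 𝓢 𝓣 ⊆ 𝓑 := symmDiff_le_sup.trans (Set.union_subset hsS hsT)
  ext x
  rw [Set.mem_symmDiff, mem_Ch_iff h hfD hsD x, mem_Ch_iff h hfS hsS x,
    mem_Ch_iff h hfT hsT x]
  set A : Set (Set U) := {B | B ∈ 𝓢 ∧ x ∈ B}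
  set B : Set (Set U) := {C | C ∈ 𝓣 ∧ x ∈ C}
  have hfA : A.Finite := hfS.subset fun C hC => hC.1
  have hfB : B.Finite := hfT.subset fun C hC => hC.1
  have hD : {C | C ∈ symmDiff 𝓢 𝓣 ∧ x ∈ C} = symmDiff A B := by
    ext C
    simp only [A, B, Set.mem_setOf_eq, Set.mem_symmDiff]
    tauto
  rw [hD]
  have h1 : (A ∪ B).ncard + (A ∩ B).ncard = A.ncard + B.ncard :=
    Set.ncard_union_add_ncard_inter A B hfA hfB
  have h2 : symmDiff A B = (A ∪ B) \ (A ∩ B) := by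
    rw [Set.symmDiff_def]
    ext y
    simp only [Set.mem_union, Set.mem_diff, Set.mem_inter_iff]
    tauto
  have h3 : ((A ∪ B) \ (A ∩ B)).ncard + (A ∩ B).ncard = (A ∪ B).ncard :=
    Set.ncard_diff_add_ncard_of_subset
      (fun y hy => Set.mem_union_left B hy.1) (hfA.union hfB)
  rw [h2]
  simp only [Nat.odd_iff]
  omega

lemma isCh_symmDiff (h : DirFam 𝓑) {X Y : Set U} (hX : IsCh 𝓑 X) (hY : IsCh 𝓑 Y) :
    IsCh 𝓑 (symmDiff X Y) := by
  obtain ⟨𝓢, hsS, hfS, rfl⟩ := hX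
  obtain ⟨𝓣, hsT, hfT, rfl⟩ := hY
  exact ⟨symmDiff 𝓢 𝓣, symmDiff_le_sup.trans (Set.union_subset hsS hsT),
    (hfS.union hfT).subset symmDiff_le_sup, (ch_symmDiff h hfS hsS hfT hsT).symm⟩

lemma isCh_inter_ball (h : DirFam 𝓑) {𝓢 : Set (Set U)} (hfS : 𝓢.Finite) (hsS : 𝓢 ⊆ 𝓑)
    {B : Set U} (hB : B ∈ 𝓑) : IsCh 𝓑 (Ch 𝓢 ∩ B) := by
  classical
  set P : Set (Set U) := {C | C ∈ 𝓢 ∧ C ⊂ B} with hP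
  set Q : Set (Set U) := {C | C ∈ 𝓢 ∧ B ⊆ C} with hQ
  have hPfin : P.Finite := hfS.subset fun C hC => hC.1
  have hQfin : Q.Finite := hfS.subset fun C hC => hC.1
  set a := Q.ncard with ha
  set 𝓡 : Set (Set U) := if Odd a then insert B P else P with h𝓡
  have hRsub : 𝓡 ⊆ 𝓑 := by
    intro C hC
    rw [h𝓡] at hC
    split_ifs at hC with hodd
    · rcases hC with hC | hC
      · exact hC ▸ hB
      · exact hsS hC.1
    · exact hsS hC.1
  have hRfin : 𝓡.Finite := by
    rw [h𝓡]; split_ifs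
    · exact hPfin.insert B
    · exact hPfin
  refine ⟨𝓡, hRsub, hRfin, ?_⟩
  ext x
  rw [Set.mem_inter_iff, mem_Ch_iff h hfS hsS x, mem_Ch_iff h hRfin hRsub x]
  by_cases hx : x ∈ B
  · -- x ∈ B
    set APx : Set (Set U) := {C | C ∈ 𝓢 ∧ C ⊂ B ∧ x ∈ C} with hAPx
    have hAPfin : APx.Finite := hfS.subset fun C hC => hC.1
    have hBnAP : B ∉ APx := fun hc => hc.2.1.ne rfl
    have hsplit : {C | C ∈ 𝓢 ∧ x ∈ C} = APx ∪ Q := by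
      ext C
      simp only [hAPx, hQ, Set.mem_setOf_eq, Set.mem_union]
      constructor
      · rintro ⟨hC𝓢, hxC⟩
        by_cases hBC : B ⊆ C
        · exact Or.inr ⟨hC𝓢, hBC⟩
        · rcases nested h (hsS hC𝓢) hB ⟨x, hxC, hx⟩ with h1 | h1
          · exact Or.inl ⟨hC𝓢, lt_of_le_of_ne h1 (fun hc => hBC (hc ▸ subset_rfl)), hxC⟩
          · exact absurd h1 hBC
      · rintro (⟨hC𝓢, -, hxC⟩ | ⟨hC𝓢, hBC⟩)
        · exact ⟨hC𝓢, hxC⟩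
        · exact ⟨hC𝓢, hBC hx⟩
    have hdisj : Disjoint APx Q := by
      rw [Set.disjoint_left]
      rintro C ⟨-, hCB, -⟩ ⟨-, hBC⟩
      exact hCB.not_ge hBC
    have hSC : {C | C ∈ 𝓢 ∧ x ∈ C}.ncard = APx.ncard + a := by
      rw [hsplit, Set.ncard_union_eq hdisj hAPfin hQfin]
    have hRC : {C | C ∈ 𝓡 ∧ x ∈ C} = if Odd a then insert B APx else APx := by
      rw [h𝓡]
      split_ifs with hodd
      · ext C
        simp only [Set.mem_setOf_eq, Set.mem_insert_iff, hAPx, hP]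
        constructor
        · rintro ⟨hC | hC, hxC⟩
          · exact Or.inl hC
          · exact Or.inr ⟨hC.1, hC.2, hxC⟩
        · rintro (rfl | ⟨hC𝓢, hCB, hxC⟩)
          · exact ⟨Or.inl rfl, hx⟩
          · exact ⟨Or.inr ⟨hC𝓢, hCB⟩, hxC⟩
      · ext C
        simp only [Set.mem_setOf_eq, hAPx, hP]
        tauto
    rw [hRC, hSC]
    split_ifs with hodd
    · rw [Set.ncard_insert_of_notMem hBnAP hAPfin]
      rw [Nat.odd_iff] at hodd ⊢
      simp only [Nat.odd_iff, hx, and_true]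
      omega
    · rw [Nat.odd_iff] at hodd
      simp only [Nat.odd_iff, hx, and_true]
      omega
  · -- x ∉ B
    have hRe : {C | C ∈ 𝓡 ∧ x ∈ C} = ∅ := by
      ext C
      simp only [Set.mem_setOf_eq, Set.mem_empty_iff_false, iff_false, not_and]
      intro hC hxC
      rw [h𝓡] at hC
      have hCB : C ⊆ B := by
        split_ifs at hC with hodd
        · rcases hC with rfl | hC
          · exact subset_rfl
          · exact hC.2.subset
        · exact hC.2.subset
      exact hx (hCB hxC)
    rw [hRe, Set.ncard_empty]
    simp [Nat.odd_iff, hx]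

lemma ch_eq_empty (h : DirFam 𝓑) (hunp : Unpackable 𝓑) {𝓡 : Set (Set U)}
    (hfin : 𝓡.Finite) (hsub : 𝓡 ⊆ 𝓑) (hCh : Ch 𝓡 = ∅) : 𝓡 = ∅ := by
  by_contra hne
  obtain ⟨B, hB, hmax⟩ : ∃ B ∈ 𝓡, ∀ C ∈ 𝓡, id B ≤ id C → id B = id C := by
    obtain ⟨B, hB⟩ := hfin.exists_maximal (Set.nonempty_iff_ne_empty.2 hne)
    exact ⟨B, hB.1, fun C hC h => le_antisymm h (hB.2 hC h)⟩
  set H : Set (Set U) := {C | C ∈ 𝓡 ∧ C ⊂ B} with hH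
  have hHfin : H.Finite := hfin.subset fun C hC => hC.1
  have hHsub : H ⊆ 𝓑 := fun C hC => hsub hC.1
  have hHlt : ∀ C ∈ H, C ⊂ B := fun C hC => hC.2
  have hne' : B ≠ ⋃₀ H := hunp B (hsub hB) H hHfin hHsub hHlt
  have hUsub : ⋃₀ H ⊆ B := Set.sUnion_subset fun C hC => hC.2.subset
  have hss : ⋃₀ H ⊂ B := lt_of_le_of_ne hUsub (Ne.symm hne')
  obtain ⟨x, hxB, hxU⟩ := Set.exists_of_ssubset hss
  have hsingle : {C | C ∈ 𝓡 ∧ x ∈ C} = {B} := by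
    ext C
    simp only [Set.mem_setOf_eq, Set.mem_singleton_iff]
    constructor
    · rintro ⟨hC𝓡, hxC⟩
      rcases nested h (hsub hC𝓡) (hsub hB) ⟨x, hxC, hxB⟩ with h1 | h1
      · rcases eq_or_ne C B with hCB | hCB
        · exact hCB
        · have hCH : C ∈ H := ⟨hC𝓡, lt_of_le_of_ne h1 hCB⟩
          exact absurd (Set.mem_sUnion.2 ⟨C, hCH, hxC⟩) hxU
      · exact ((hmax C hC𝓡 h1).symm : C = B)
    · rintro rfl
      exact ⟨hB, hxB⟩
  have : x ∈ Ch 𝓡 := by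
    rw [mem_Ch_iff h hfin hsub x, hsingle, Set.ncard_singleton]
    exact odd_one
  rw [hCh] at this
  exact this

lemma ch_insert (h : DirFam 𝓑) {𝓢 : Set (Set U)} (hfS : 𝓢.Finite) (hsS : 𝓢 ⊆ 𝓑)
    {B : Set U} (hB : B ∈ 𝓑) (hBS : B ∉ 𝓢) :
    Ch (insert B 𝓢) = symmDiff (Ch 𝓢) B := by
  have : insert B 𝓢 = symmDiff 𝓢 {B} := by
    rw [Set.symmDiff_def]
    ext C
    simp only [Set.mem_insert_iff, Set.mem_union, Set.mem_diff, Set.mem_singleton_iff]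
    constructor
    · rintro (rfl | hC)
      · exact Or.inr ⟨rfl, hBS⟩
      · exact Or.inl ⟨hC, fun hc => hBS (hc ▸ hC)⟩
    · rintro (⟨hC, -⟩ | ⟨rfl, -⟩)
      · exact Or.inr hC
      · exact Or.inl rfl
  rw [this, ch_symmDiff h hfS hsS (Set.finite_singleton B) (Set.singleton_subset_iff.2 hB),
    ch_singleton h hB]

lemma isCh_inter (h : DirFam 𝓑) {X Y : Set U} (hX : IsCh 𝓑 X) (hY : IsCh 𝓑 Y) :
    IsCh 𝓑 (X ∩ Y) := by
  obtain ⟨𝓣, hsT, hfT, rfl⟩ := hY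
  refine Set.Finite.induction_on
    (motive := fun 𝓣 _ => 𝓣 ⊆ 𝓑 → ∀ X, IsCh 𝓑 X → IsCh 𝓑 (X ∩ Ch 𝓣)) _ hfT ?_ ?_ hsT X hX
  · intro _ X _
    rw [ch_empty h, Set.inter_empty]
    exact ⟨∅, Set.empty_subset 𝓑, Set.finite_empty, (ch_empty h).symm⟩
  · intro B 𝓣₀ hB𝓣₀ hfT₀ ih hsT' X hX'
    have hB : B ∈ 𝓑 := hsT' (Set.mem_insert B 𝓣₀)
    have hsT₀ : 𝓣₀ ⊆ 𝓑 := fun C hC => hsT' (Set.mem_insert_of_mem B hC)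
    rw [ch_insert h hfT₀ hsT₀ hB hB𝓣₀]
    have hdist : X ∩ symmDiff (Ch 𝓣₀) B = symmDiff (X ∩ Ch 𝓣₀) (X ∩ B) :=
      inf_symmDiff_distrib_left X (Ch 𝓣₀) B
    rw [hdist]
    have h1 : IsCh 𝓑 (X ∩ Ch 𝓣₀) := ih hsT₀ X hX'
    have h2 : IsCh 𝓑 (X ∩ B) := by
      obtain ⟨𝓢, hsS, hfS, rfl⟩ := hX'
      exact isCh_inter_ball h hfS hsS hB
    exact isCh_symmDiff h h1 h2

lemma isCh_constr (h : DirFam 𝓑) (hU : (Set.univ : Set U) ∈ 𝓑) {X : Set U}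
    (hX : Constr 𝓑 X) : IsCh 𝓑 X := by
  induction hX with
  | ball hB =>
    exact ⟨{_}, Set.singleton_subset_iff.2 hB, Set.finite_singleton _,
      (ch_singleton h hB).symm⟩
  | @compl Y hY ih =>
    have huniv : IsCh 𝓑 (Set.univ : Set U) :=
      ⟨{Set.univ}, Set.singleton_subset_iff.2 hU, Set.finite_singleton _,
        (ch_singleton h hU).symm⟩
    have : Yᶜ = symmDiff (Set.univ : Set U) Y := by
      rw [show (Set.univ : Set U) = (⊤ : Set U) from rfl, top_symmDiff, hnot_eq_compl]
    rw [this]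
    exact isCh_symmDiff h huniv ih
  | @union Y Z hY hZ ihY ihZ =>
    have : Y ∪ Z = symmDiff (symmDiff Y Z) (Y ∩ Z) := by
      rw [show Y ∩ Z = Y ⊓ Z from rfl, symmDiff_symmDiff_inf]
      rfl
    rw [this]
    exact isCh_symmDiff h (isCh_symmDiff h ihY ihZ) (isCh_inter h ihY ihZ)

end SwissAux

/-- In an unpackable directed family, every constructible set is Ch(𝓢) for a unique
finite set 𝓢 of balls. -/
theorem stmt11 (𝓑 : Set (Set U)) (h : DirFam 𝓑) (hU : (Set.univ : Set U) ∈ 𝓑)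
    (hunp : Unpackable 𝓑) (X : Set U) (hX : Constr 𝓑 X) :
    ∃! 𝓢 : Set (Set U), 𝓢 ⊆ 𝓑 ∧ 𝓢.Finite ∧ X = Ch 𝓢 := by
  obtain ⟨𝓢, hsS, hfS, hXS⟩ := SwissAux.isCh_constr h hU hX
  refine ⟨𝓢, ⟨hsS, hfS, hXS⟩, ?_⟩
  rintro 𝓣 ⟨hsT, hfT, hXT⟩
  have hchEq : Ch 𝓣 = Ch 𝓢 := by rw [← hXT, hXS]
  have hD : Ch (symmDiff 𝓣 𝓢) = ∅ := by
    rw [SwissAux.ch_symmDiff h hfT hsT hfS hsS, hchEq, symmDiff_self]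
    rfl
  have : symmDiff 𝓣 𝓢 = ∅ :=
    SwissAux.ch_eq_empty h hunp ((hfT.union hfS).subset symmDiff_le_sup)
      (symmDiff_le_sup.trans (Set.union_subset hsT hsS)) hD
  have : symmDiff 𝓣 𝓢 = (⊥ : Set (Set U)) := this
  exact symmDiff_eq_bot.1 this
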